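/- Let A and B be m×n complex matrices and E = B − A. Define β₁ := ‖A†‖₂⁴(‖E‖_F² − ‖EB†B‖_F²) + ‖B†‖₂⁴(‖E‖_F² − ‖AA†E‖_F²) and β₂ := ‖A†‖₂⁴(‖E‖_F² − ‖BB†E‖_F²) + ‖B†‖₂⁴(‖E‖_F² − ‖EA†A‖_F²). Then ‖B† − A†‖_F² ≤ min{β₁ + ‖B†EA†‖_F², β₂ + ‖A†EB†‖_F²}. -/

import Mathlib

open Matrix
open scoped Matrix.Norms.L2Operator

/-- The square of the Frobenius norm of a complex matrix. -/
noncomputable def frobSq {α β : Type*} [Fintype α] [Fintype β] (M : Matrix α β ℂ) : ℝ :=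
  ∑ i, ∑ j, ‖M i j‖ ^ 2

/-- The spectral norm (ℓ²-operator norm) of a complex matrix. -/
noncomputable def spec {α β : Type*} [Fintype α] [Fintype β] [DecidableEq β]
    (M : Matrix α β ℂ) : ℝ :=
  ‖LinearMap.toContinuousLinearMap (Matrix.toEuclideanLin M)‖

/-- `X` is the Moore–Penrose inverse of `M` (the four Penrose equations). -/
def IsMoorePenrose {α β : Type*} [Fintype α] [Fintype β]
    (M : Matrix α β ℂ) (X : Matrix β α ℂ) : Prop :=
  M * X * M = M ∧ X * M * X = X ∧ (M * X)ᴴ = M * X ∧ (X * M)ᴴ = X * M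

variable {α β γ : Type*} [Fintype α] [Fintype β] [Fintype γ]

lemma spec_eq [DecidableEq β] (M : Matrix α β ℂ) : spec M = ‖M‖ := rfl

lemma spec_conjT [DecidableEq α] [DecidableEq β] (M : Matrix α β ℂ) : spec Mᴴ = spec M := by
  rw [spec_eq, spec_eq, l2_opNorm_conjTranspose]

lemma spec_nonneg [DecidableEq β] (M : Matrix α β ℂ) : 0 ≤ spec M := by
  rw [spec_eq]; exact norm_nonneg _

lemma normsq_vec (v : α → ℂ) :
    ∑ i, ‖v i‖ ^ 2 = ‖(WithLp.equiv 2 (α → ℂ)).symm v‖ ^ 2 := by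
  rw [EuclideanSpace.norm_eq, Real.sq_sqrt (by positivity)]
  simp [WithLp.equiv_symm_apply]

lemma frobSq_nonneg (M : Matrix α β ℂ) : 0 ≤ frobSq M := by
  unfold frobSq; positivity

lemma frobSq_zero : frobSq (0 : Matrix α β ℂ) = 0 := by simp [frobSq]

lemma frobSq_neg (M : Matrix α β ℂ) : frobSq (-M) = frobSq M := by simp [frobSq]

lemma frobSq_conjT (M : Matrix α β ℂ) : frobSq Mᴴ = frobSq M := by
  unfold frobSq
  rw [Finset.sum_comm]
  simp [conjTranspose_apply]

lemma frobSq_add (X Y : Matrix α β ℂ) :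
    frobSq (X + Y) = frobSq X + frobSq Y + 2 * (trace (Xᴴ * Y)).re := by
  have h : ∀ z w : ℂ, ‖z + w‖ ^ 2 = ‖z‖ ^ 2 + ‖w‖ ^ 2 + 2 * ((starRingEnd ℂ) z * w).re := by
    intro z w
    simp only [Complex.sq_norm, Complex.normSq_apply,
      Complex.add_re, Complex.add_im, Complex.mul_re, Complex.conj_re, Complex.conj_im]
    ring
  have ht : (trace (Xᴴ * Y)).re = ∑ i, ∑ j, ((starRingEnd ℂ) (X i j) * Y i j).re := by
    rw [trace]
    simp only [diag, mul_apply, conjTranspose_apply, Complex.re_sum]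
    rw [Finset.sum_comm]
    rfl
  simp only [frobSq, Matrix.add_apply, h, Finset.sum_add_distrib, ht, Finset.mul_sum]

lemma frobSq_add_of_orth {X Y : Matrix α β ℂ} (h : Xᴴ * Y = 0) :
    frobSq (X + Y) = frobSq X + frobSq Y := by
  rw [frobSq_add, h]; simp

lemma pyth_left (P : Matrix α α ℂ) (M : Matrix α β ℂ) (h1 : Pᴴ = P) (h2 : P * P = P) :
    frobSq M = frobSq (P * M) + frobSq (M - P * M) := by
  have horth : (P * M)ᴴ * (M - P * M) = 0 := by
    rw [conjTranspose_mul, h1, Matrix.mul_sub]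
    rw [show Mᴴ * P * (P * M) = Mᴴ * P * M by rw [Matrix.mul_assoc, ← Matrix.mul_assoc P, h2, ← Matrix.mul_assoc]]
    simp
  have := frobSq_add_of_orth horth
  simpa using this

lemma pyth_right (P : Matrix β β ℂ) (M : Matrix α β ℂ) (h1 : Pᴴ = P) (h2 : P * P = P) :
    frobSq M = frobSq (M * P) + frobSq (M - M * P) := by
  have := pyth_left P Mᴴ h1 h2
  rw [show P * Mᴴ = (M * P)ᴴ by rw [conjTranspose_mul, h1],
    show Mᴴ - (M * P)ᴴ = (M - M * P)ᴴ by rw [conjTranspose_sub]] at this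
  rw [frobSq_conjT, frobSq_conjT, frobSq_conjT] at this
  exact this

lemma frobSq_mul_le [DecidableEq β] (N : Matrix α β ℂ) (M : Matrix β γ ℂ) :
    frobSq (N * M) ≤ spec N ^ 2 * frobSq M := by
  rw [frobSq, Finset.sum_comm,
    show frobSq M = ∑ j : γ, ∑ k : β, ‖M k j‖ ^ 2 from by rw [frobSq]; exact Finset.sum_comm,
    Finset.mul_sum]
  apply Finset.sum_le_sum
  intro j _
  have hcol : ∀ i, (N * M) i j = (N *ᵥ fun k => M k j) i := by
    intro i; simp [mul_apply, mulVec, dotProduct]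
  simp only [hcol]
  rw [normsq_vec, normsq_vec]
  have hb := N.l2_opNorm_mulVec ((WithLp.equiv 2 (β → ℂ)).symm fun k => M k j)
  have h2 : ‖(EuclideanSpace.equiv α ℂ).symm (N *ᵥ (WithLp.equiv 2 (β → ℂ)).symm fun k => M k j)‖
      = ‖(WithLp.equiv 2 (α → ℂ)).symm (N *ᵥ fun k => M k j)‖ := rfl
  rw [h2] at hb
  calc ‖(WithLp.equiv 2 (α → ℂ)).symm (N *ᵥ fun k => M k j)‖ ^ 2
      ≤ (‖N‖ * ‖(WithLp.equiv 2 (β → ℂ)).symm fun k => M k j‖) ^ 2 :=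
        pow_le_pow_left₀ (norm_nonneg _) hb 2
    _ = spec N ^ 2 * ‖(WithLp.equiv 2 (β → ℂ)).symm fun k => M k j‖ ^ 2 := by
        rw [spec_eq]; ring

lemma frobSq_mul_right_le [DecidableEq β] [DecidableEq γ] (M : Matrix α β ℂ) (N : Matrix β γ ℂ) :
    frobSq (M * N) ≤ spec N ^ 2 * frobSq M := by
  rw [← frobSq_conjT (M * N), conjTranspose_mul, ← frobSq_conjT M, ← spec_conjT]
  exact frobSq_mul_le Nᴴ Mᴴ

lemma key {m n : ℕ}
    (A B : Matrix (Fin m) (Fin n) ℂ)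
    (Adag Bdag : Matrix (Fin n) (Fin m) ℂ)
    (hA : IsMoorePenrose A Adag) (hB : IsMoorePenrose B Bdag)
    (E : Matrix (Fin m) (Fin n) ℂ) (hE : E = B - A) :
    frobSq (Bdag - Adag) ≤
      spec Adag ^ 4 * (frobSq E - frobSq (E * Bdag * B))
        + spec Bdag ^ 4 * (frobSq E - frobSq (A * Adag * E))
        + frobSq (Bdag * E * Adag) := by
  obtain ⟨hA1, hA2, hA3, hA4⟩ := hA
  obtain ⟨hB1, hB2, hB3, hB4⟩ := hB
  have hPP : (Bdag * B) * (Bdag * B) = Bdag * B := by rw [← Matrix.mul_assoc, hB2]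
  have hQQ : (A * Adag) * (A * Adag) = A * Adag := by rw [← Matrix.mul_assoc, hA1]
  -- rewrite rules
  have r1 : Adag * (A * Adag) = Adag := by rw [← Matrix.mul_assoc, hA2]
  have r1' : ∀ {κ : Type} (X : Matrix (Fin m) κ ℂ),
      Adag * (A * (Adag * X)) = Adag * X := by
    intro κ X; rw [← Matrix.mul_assoc, ← Matrix.mul_assoc, hA2]
  have r3 : Bdag * (B * Bdag) = Bdag := by rw [← Matrix.mul_assoc, hB2]
  have r3' : ∀ {κ : Type} (X : Matrix (Fin m) κ ℂ),
      Bdag * (B * (Bdag * X)) = Bdag * X := by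
    intro κ X; rw [← Matrix.mul_assoc, ← Matrix.mul_assoc, hB2]
  have r5 : Aᴴ * (A * Adag) = Aᴴ := by
    rw [← hA3, ← conjTranspose_mul, hA1]
  have r5l : Aᴴ * A * Adag = Aᴴ := by rw [Matrix.mul_assoc, r5]
  have r5' : ∀ {κ : Type} (X : Matrix (Fin m) κ ℂ),
      Aᴴ * (A * (Adag * X)) = Aᴴ * X := by
    intro κ X; rw [← Matrix.mul_assoc, ← Matrix.mul_assoc, r5l]
  have r6l : Bdag * B * Bᴴ = Bᴴ := by
    rw [← hB4, ← conjTranspose_mul, ← Matrix.mul_assoc, hB1]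
  have r6 : Bdag * (B * Bᴴ) = Bᴴ := by rw [← Matrix.mul_assoc, r6l]
  have r6' : ∀ {κ : Type} (X : Matrix (Fin m) κ ℂ),
      Bdag * (B * (Bᴴ * X)) = Bᴴ * X := by
    intro κ X; rw [← Matrix.mul_assoc, ← Matrix.mul_assoc, r6l]
  have r7 : Bdagᴴ * Bᴴ = B * Bdag := by rw [← conjTranspose_mul, hB3]
  have r7' : ∀ {κ : Type} (X : Matrix (Fin m) κ ℂ),
      Bdagᴴ * (Bᴴ * X) = B * (Bdag * X) := by
    intro κ X; rw [← Matrix.mul_assoc, r7, Matrix.mul_assoc]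
  have r9l : Aᴴ * Adagᴴ * Adag = Adag := by rw [← conjTranspose_mul, hA4, hA2]
  have r9 : Aᴴ * (Adagᴴ * Adag) = Adag := by rw [← Matrix.mul_assoc, r9l]
  have r9' : ∀ {κ : Type} (X : Matrix (Fin m) κ ℂ),
      Aᴴ * (Adagᴴ * (Adag * X)) = Adag * X := by
    intro κ X; rw [← Matrix.mul_assoc, ← Matrix.mul_assoc, r9l]
  subst hE
  -- the four pieces
  have I1 : Bdag * B * (Bdag - Adag) * (A * Adag) = -(Bdag * (B - A) * Adag) := by
    simp only [conjTranspose_sub, Matrix.sub_mul, Matrix.mul_sub, Matrix.mul_assoc,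
      r1, r1', r3, r3', r5, r5', r6, r6', r7, r7', r9, r9']
    abel
  have I2 : Bdag * B * (Bdag - Adag) - Bdag * B * (Bdag - Adag) * (A * Adag)
      = Bdag * (Bdagᴴ * ((B - A)ᴴ - (B - A)ᴴ * (A * Adag))) := by
    simp only [conjTranspose_sub, Matrix.sub_mul, Matrix.mul_sub, Matrix.mul_assoc,
      r1, r1', r3, r3', r5, r5', r6, r6', r7, r7', r9, r9']
    abel
  have I3 : ((Bdag - Adag) - Bdag * B * (Bdag - Adag)) * (A * Adag)
      = ((B - A)ᴴ - Bdag * B * (B - A)ᴴ) * Adagᴴ * Adag := by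
    simp only [conjTranspose_sub, Matrix.sub_mul, Matrix.mul_sub, Matrix.mul_assoc,
      r1, r1', r3, r3', r5, r5', r6, r6', r7, r7', r9, r9']
    abel
  have I4 : ((Bdag - Adag) - Bdag * B * (Bdag - Adag))
      - ((Bdag - Adag) - Bdag * B * (Bdag - Adag)) * (A * Adag) = 0 := by
    simp only [conjTranspose_sub, Matrix.sub_mul, Matrix.mul_sub, Matrix.mul_assoc,
      r1, r1', r3, r3', r5, r5', r6, r6', r7, r7', r9, r9']
    abel
  -- Pythagoras splits
  have hsplit1 := pyth_left (Bdag * B) (Bdag - Adag) hB4 hPP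
  have hsplit2 := pyth_right (A * Adag) (Bdag * B * (Bdag - Adag)) hA3 hQQ
  have hsplit3 := pyth_right (A * Adag) ((Bdag - Adag) - Bdag * B * (Bdag - Adag)) hA3 hQQ
  rw [I4, frobSq_zero] at hsplit3
  have hI1 : frobSq (Bdag * B * (Bdag - Adag) * (A * Adag)) = frobSq (Bdag * (B - A) * Adag) := by
    rw [I1, frobSq_neg]
  -- bound for the middle piece
  have hEQ : (B - A)ᴴ - (B - A)ᴴ * (A * Adag) = ((B - A) - (A * Adag) * (B - A))ᴴ := by
    simp [conjTranspose_sub, conjTranspose_mul, hA3]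
  have hpyA := pyth_left (A * Adag) (B - A) hA3 hQQ
  have hfqA : frobSq ((B - A)ᴴ - (B - A)ᴴ * (A * Adag))
      = frobSq (B - A) - frobSq (A * Adag * (B - A)) := by
    rw [hEQ, frobSq_conjT]
    linarith [hpyA]
  have bound2 : frobSq (Bdag * B * (Bdag - Adag) - Bdag * B * (Bdag - Adag) * (A * Adag))
      ≤ spec Bdag ^ 4 * (frobSq (B - A) - frobSq (A * Adag * (B - A))) := by
    rw [I2]
    have b1 := frobSq_mul_le Bdag (Bdagᴴ * ((B - A)ᴴ - (B - A)ᴴ * (A * Adag)))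
    have b2 := frobSq_mul_le Bdagᴴ ((B - A)ᴴ - (B - A)ᴴ * (A * Adag))
    rw [spec_conjT] at b2
    calc frobSq (Bdag * (Bdagᴴ * ((B - A)ᴴ - (B - A)ᴴ * (A * Adag))))
        ≤ spec Bdag ^ 2 * frobSq (Bdagᴴ * ((B - A)ᴴ - (B - A)ᴴ * (A * Adag))) := b1
      _ ≤ spec Bdag ^ 2 * (spec Bdag ^ 2 * frobSq ((B - A)ᴴ - (B - A)ᴴ * (A * Adag))) := by
          apply mul_le_mul_of_nonneg_left b2 (by positivity)
      _ = spec Bdag ^ 4 * (frobSq (B - A) - frobSq (A * Adag * (B - A))) := by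
          rw [hfqA]; ring
  -- bound for the third piece
  have hEP : (B - A)ᴴ - Bdag * B * (B - A)ᴴ = ((B - A) - (B - A) * (Bdag * B))ᴴ := by
    simp [conjTranspose_sub, conjTranspose_mul, hB4]
  have hpyB := pyth_right (Bdag * B) (B - A) hB4 hPP
  have hfqB : frobSq ((B - A)ᴴ - Bdag * B * (B - A)ᴴ)
      = frobSq (B - A) - frobSq ((B - A) * Bdag * B) := by
    rw [hEP, frobSq_conjT, Matrix.mul_assoc]
    linarith [hpyB]

  have bound3 : frobSq (((Bdag - Adag) - Bdag * B * (Bdag - Adag)) * (A * Adag))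
      ≤ spec Adag ^ 4 * (frobSq (B - A) - frobSq ((B - A) * Bdag * B)) := by
    rw [I3]
    have b1 := frobSq_mul_right_le (((B - A)ᴴ - Bdag * B * (B - A)ᴴ) * Adagᴴ) Adag
    have b2 := frobSq_mul_right_le ((B - A)ᴴ - Bdag * B * (B - A)ᴴ) Adagᴴ
    rw [spec_conjT] at b2
    calc frobSq (((B - A)ᴴ - Bdag * B * (B - A)ᴴ) * Adagᴴ * Adag)
        ≤ spec Adag ^ 2 * frobSq (((B - A)ᴴ - Bdag * B * (B - A)ᴴ) * Adagᴴ) := b1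
      _ ≤ spec Adag ^ 2 * (spec Adag ^ 2 * frobSq ((B - A)ᴴ - Bdag * B * (B - A)ᴴ)) := by
          apply mul_le_mul_of_nonneg_left b2 (by positivity)
      _ = spec Adag ^ 4 * (frobSq (B - A) - frobSq ((B - A) * Bdag * B)) := by
          rw [hfqB]; ring
  linarith [hsplit1, hsplit2, hsplit3, bound2, bound3, hI1]

theorem stmt3 {m n : ℕ}
    (A B : Matrix (Fin m) (Fin n) ℂ)
    (Adag Bdag : Matrix (Fin n) (Fin m) ℂ)
    (hA : IsMoorePenrose A Adag) (hB : IsMoorePenrose B Bdag)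
    (E : Matrix (Fin m) (Fin n) ℂ) (hE : E = B - A)
    :
    frobSq (Bdag - Adag) ≤
      min
        (spec Adag ^ 4 * (frobSq E - frobSq (E * Bdag * B))
          + spec Bdag ^ 4 * (frobSq E - frobSq (A * Adag * E))
          + frobSq (Bdag * E * Adag))
        (spec Adag ^ 4 * (frobSq E - frobSq (B * Bdag * E))
          + spec Bdag ^ 4 * (frobSq E - frobSq (E * Adag * A))
          + frobSq (Adag * E * Bdag)) := by
  apply le_min
  · exact key A B Adag Bdag hA hB E hE
  · have h := key B A Bdag Adag hB hA (-E) (by rw [hE, neg_sub])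
    have hDD : frobSq (Adag - Bdag) = frobSq (Bdag - Adag) := by
      rw [← frobSq_neg (Bdag - Adag), neg_sub]
    simp only [Matrix.neg_mul, Matrix.mul_neg, frobSq_neg, hDD] at h
    linarith
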